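/- (Zero DI capacity in the double-exponential scale for fast fading.) Fix A > 0, σ > 0, a probability measure ν on ℝ with finite second moment, and reals λ₁, λ₂ ≥ 0 with λ₁ + λ₂ < 1. Then for every R > 0 there exists n₀ such that for all n ≥ n₀ the following holds: there do NOT exist M ≥ 2^{2^{nR}} vectors u₁, …, u_M ∈ ℝⁿ with ‖u_i‖² ≤ nA for every i together with decoding-region families D^{(1)}, …, D^{(M)} such that P(u_i, D^{(i)}) ≥ 1 − λ₁ for every i and P(u_i, D^{(j)}) ≤ λ₂ for every ordered pair i ≠ j. In other words, the DI capacity of the fast-fading Gaussian channel in the scale L(n,R) = 2^{2^{nR}} is zero. -/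

import Mathlib

open MeasureTheory ProbabilityTheory Real

/-- The `n`-fold product of the Gaussian measure `N(0,σ²)` on `ℝ`. -/
noncomputable def gaussPi (n : ℕ) (σ : ℝ) : Measure (Fin n → ℝ) :=
  Measure.pi fun _ => gaussianReal 0 ⟨σ ^ 2, sq_nonneg σ⟩

/-- Acceptance probability of a codeword `u` for the decoding-region family
`D` (indexed by the fading realization `g`) over the fast-fading Gaussian
channel: `P(u,D) = ∫ P_Z(g∘u + Z ∈ D_g) dν^⊗n(g)`. -/
noncomputable def accProb (n : ℕ) (σ : ℝ) (ν : Measure ℝ)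
    (u : Fin n → ℝ) (D : (Fin n → ℝ) → Set (Fin n → ℝ)) : ℝ :=
  ∫ g, (gaussPi n σ {z : Fin n → ℝ | (fun t => g t * u t + z t) ∈ D g}).toReal
    ∂(Measure.pi fun _ : Fin n => ν)

noncomputable def gvar (σ : ℝ) : NNReal := ⟨σ ^ 2, sq_nonneg σ⟩

lemma gvar_ne_zero {σ : ℝ} (hσ : 0 < σ) : gvar σ ≠ 0 := by
  simp only [gvar, ne_eq, ← NNReal.coe_eq_zero, NNReal.coe_mk]
  intro h
  have h' : σ ^ 2 = 0 := congrArg NNReal.toReal h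
  exact hσ.ne' ((pow_eq_zero_iff two_ne_zero).mp h')

lemma gvar_coe (σ : ℝ) : ((gvar σ : NNReal) : ℝ) = σ ^ 2 := rfl

lemma gauss_density_mono {σ : ℝ} (hσ : 0 < σ) {a x : ℝ} (hx : a ^ 2 / 2 ≤ a * x) :
    gaussianPDFReal 0 (gvar σ) x ≤ gaussianPDFReal a (gvar σ) x := by
  unfold gaussianPDFReal
  have h2v : (0:ℝ) < 2 * (gvar σ : ℝ) := by rw [gvar_coe]; positivity
  refine mul_le_mul_of_nonneg_left ?_ (by positivity)
  refine Real.exp_le_exp.mpr ?_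
  rw [div_le_div_iff_of_pos_right h2v]
  nlinarith

lemma gauss_density_anti {σ : ℝ} (hσ : 0 < σ) {a x : ℝ} (hx : a * x ≤ a ^ 2 / 2) :
    gaussianPDFReal a (gvar σ) x ≤ gaussianPDFReal 0 (gvar σ) x := by
  unfold gaussianPDFReal
  have h2v : (0:ℝ) < 2 * (gvar σ : ℝ) := by rw [gvar_coe]; positivity
  refine mul_le_mul_of_nonneg_left ?_ (by positivity)
  refine Real.exp_le_exp.mpr ?_
  rw [div_le_div_iff_of_pos_right h2v]
  nlinarith

lemma gauss_measure_mono {σ : ℝ} (hσ : 0 < σ) {a b : ℝ} {E : Set ℝ}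
    (h : ∀ x ∈ E, gaussianPDFReal a (gvar σ) x ≤ gaussianPDFReal b (gvar σ) x) :
    gaussianReal a (gvar σ) E ≤ gaussianReal b (gvar σ) E := by
  rw [gaussianReal_apply _ (gvar_ne_zero hσ), gaussianReal_apply _ (gvar_ne_zero hσ)]
  exact setLIntegral_mono (measurable_gaussianPDF _ _) fun x hx =>
    ENNReal.ofReal_le_ofReal (h x hx)

lemma toReal_add_meas {μ : Measure ℝ} [IsFiniteMeasure μ] (s : Set ℝ) {t : Set ℝ}
    (ht : MeasurableSet t) :
    (μ s).toReal = (μ (s ∩ t)).toReal + (μ (s \ t)).toReal := by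
  rw [← ENNReal.toReal_add (measure_ne_top _ _) (measure_ne_top _ _),
    measure_inter_add_diff s ht]

lemma gauss_pdf_le {σ : ℝ} (hσ : 0 < σ) (x : ℝ) :
    gaussianPDFReal 0 (gvar σ) x ≤ 1 / σ := by
  unfold gaussianPDFReal
  have h1 : rexp (-(x - 0) ^ 2 / (2 * (gvar σ : ℝ))) ≤ 1 := by
    rw [Real.exp_le_one_iff]
    have : (0:ℝ) < 2 * (gvar σ : ℝ) := by rw [gvar_coe]; positivity
    apply div_nonpos_of_nonpos_of_nonneg (by nlinarith [sq_nonneg (x - 0)]) this.le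
  have h2 : σ ≤ √(2 * π * (gvar σ)) := by
    rw [gvar_coe]
    calc σ = √(σ ^ 2) := by rw [Real.sqrt_sq hσ.le]
    _ ≤ √(2 * π * σ ^ 2) := by
        apply Real.sqrt_le_sqrt; nlinarith [Real.pi_gt_three, sq_nonneg σ]
  calc (√(2 * π * (gvar σ : ℝ)))⁻¹ * rexp (-(x - 0) ^ 2 / (2 * (gvar σ : ℝ)))
      ≤ (√(2 * π * (gvar σ : ℝ)))⁻¹ * 1 := by
        apply mul_le_mul_of_nonneg_left h1 (by positivity)
    _ = (√(2 * π * (gvar σ : ℝ)))⁻¹ := mul_one _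
    _ ≤ 1 / σ := by
        rw [one_div]
        exact inv_anti₀ hσ h2

lemma gauss_strip_bound {σ : ℝ} (hσ : 0 < σ) (a : ℝ) {E : Set ℝ}
    (hvol : volume E ≤ ENNReal.ofReal |a|) :
    (gaussianReal 0 (gvar σ) E).toReal ≤ |a| / σ := by
  have h : gaussianReal 0 (gvar σ) E ≤ ENNReal.ofReal (|a| / σ) := by
    rw [gaussianReal_apply _ (gvar_ne_zero hσ)]
    calc ∫⁻ x in E, gaussianPDF 0 (gvar σ) x
        ≤ ∫⁻ _ in E, ENNReal.ofReal (1 / σ) := by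
          apply setLIntegral_mono measurable_const
          exact fun x _ => ENNReal.ofReal_le_ofReal (gauss_pdf_le hσ x)
      _ = ENNReal.ofReal (1 / σ) * volume E := setLIntegral_const E _
      _ ≤ ENNReal.ofReal (1 / σ) * ENNReal.ofReal |a| := by
          exact mul_le_mul_right hvol _
      _ = ENNReal.ofReal (|a| / σ) := by
          rw [← ENNReal.ofReal_mul (by positivity)]
          congr 1; field_simp
  calc (gaussianReal 0 (gvar σ) E).toReal ≤ (ENNReal.ofReal (|a| / σ)).toReal :=
        ENNReal.toReal_mono ENNReal.ofReal_ne_top h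
    _ = |a| / σ := ENNReal.toReal_ofReal (by positivity)


lemma gauss_shift_one {σ : ℝ} (hσ : 0 < σ) (a : ℝ) {S : Set ℝ} (hS : MeasurableSet S) :
    |(gaussianReal a (gvar σ) S).toReal - (gaussianReal 0 (gvar σ) S).toReal| ≤ |a| / σ := by
  rcases eq_or_ne a 0 with rfl | ha
  · simp only [sub_self, abs_zero]
    positivity
  set γa := gaussianReal a (gvar σ) with hγa
  set γ0 := gaussianReal 0 (gvar σ) with hγ0
  set T : Set ℝ := {x | a ^ 2 / 2 ≤ a * x} with hT
  have hTm : MeasurableSet T :=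
    measurableSet_le measurable_const (measurable_id.const_mul a)
  have hmT : ∀ E : Set ℝ, E ⊆ T → (γ0 E).toReal ≤ (γa E).toReal := fun E hE =>
    ENNReal.toReal_mono (measure_ne_top _ _)
      (gauss_measure_mono hσ fun x hx => gauss_density_mono hσ (hE hx))
  have hmTc : ∀ E : Set ℝ, E ⊆ Tᶜ → (γa E).toReal ≤ (γ0 E).toReal := fun E hE =>
    ENNReal.toReal_mono (measure_ne_top _ _)
      (gauss_measure_mono hσ fun x hx => gauss_density_anti hσ (le_of_not_ge (hE hx)))
  have hkey : |(γa S).toReal - (γ0 S).toReal| ≤ (γa T).toReal - (γ0 T).toReal := by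
    have hSa := toReal_add_meas (μ := γa) S hTm
    have hS0 := toReal_add_meas (μ := γ0) S hTm
    have hTa := toReal_add_meas (μ := γa) T hS
    have hT0 := toReal_add_meas (μ := γ0) T hS
    have hTca := toReal_add_meas (μ := γa) Tᶜ hS
    have hTc0 := toReal_add_meas (μ := γ0) Tᶜ hS
    have hic : T ∩ S = S ∩ T := Set.inter_comm T S
    have hicc : Tᶜ ∩ S = S \ T := by rw [Set.inter_comm]; rfl
    rw [hic] at hTa hT0
    rw [hicc] at hTca hTc0
    have h1 : (γ0 (S ∩ T)).toReal ≤ (γa (S ∩ T)).toReal := hmT _ Set.inter_subset_right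
    have h2 : (γa (S \ T)).toReal ≤ (γ0 (S \ T)).toReal := hmTc _ (Set.diff_subset_compl S T)
    have h3 : (γ0 (T \ S)).toReal ≤ (γa (T \ S)).toReal := hmT _ Set.diff_subset
    have h4 : (γa (Tᶜ \ S)).toReal ≤ (γ0 (Tᶜ \ S)).toReal := hmTc _ Set.diff_subset
    have hca : (γa T).toReal + (γa Tᶜ).toReal = 1 := by
      rw [← ENNReal.toReal_add (measure_ne_top _ _) (measure_ne_top _ _),
        measure_add_measure_compl hTm]
      simp
    have hc0 : (γ0 T).toReal + (γ0 Tᶜ).toReal = 1 := by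
      rw [← ENNReal.toReal_add (measure_ne_top _ _) (measure_ne_top _ _),
        measure_add_measure_compl hTm]
      simp
    rw [abs_le]
    constructor <;> linarith
  -- bound (γa T).toReal - (γ0 T).toReal
  have hmap : γa T = γ0 ((· + a) ⁻¹' T) := by
    have h := gaussianReal_map_add_const (μ := 0) (v := gvar σ) a
    rw [zero_add] at h
    rw [hγa, ← h]
    exact Measure.map_apply (measurable_add_const a) hTm
  set T' : Set ℝ := (· + a) ⁻¹' T with hT'
  have hsub : T ⊆ T' := by
    intro x hx
    simp only [hT', hT, Set.mem_preimage, Set.mem_setOf_eq] at hx ⊢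
    nlinarith [sq_nonneg a]
  have hT'm : MeasurableSet T' := (measurable_add_const a) hTm
  have hdec := toReal_add_meas (μ := γ0) T' hTm
  have hie : T' ∩ T = T := Set.inter_eq_self_of_subset_right hsub
  rw [hie] at hdec
  have hdiff : (γa T).toReal - (γ0 T).toReal = (γ0 (T' \ T)).toReal := by
    rw [hmap]; linarith
  have hvol : volume (T' \ T) ≤ ENNReal.ofReal |a| := by
    rcases lt_or_gt_of_ne ha with hneg | hpos
    · have : T' \ T ⊆ Set.Icc (a / 2) (-(a / 2)) := by
        intro x ⟨hx1, hx2⟩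
        simp only [hT', hT, Set.mem_preimage, Set.mem_setOf_eq] at hx1 hx2
        constructor
        · nlinarith
        · nlinarith
      calc volume (T' \ T) ≤ volume (Set.Icc (a / 2) (-(a / 2))) := measure_mono this
        _ = ENNReal.ofReal (-(a / 2) - a / 2) := Real.volume_Icc
        _ = ENNReal.ofReal |a| := by rw [abs_of_neg hneg]; ring_nf
    · have : T' \ T ⊆ Set.Icc (-(a / 2)) (a / 2) := by
        intro x ⟨hx1, hx2⟩
        simp only [hT', hT, Set.mem_preimage, Set.mem_setOf_eq] at hx1 hx2
        constructor
        · nlinarith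
        · nlinarith
      calc volume (T' \ T) ≤ volume (Set.Icc (-(a / 2)) (a / 2)) := measure_mono this
        _ = ENNReal.ofReal (a / 2 - -(a / 2)) := Real.volume_Icc
        _ = ENNReal.ofReal |a| := by rw [abs_of_pos hpos]; ring_nf
  calc |(γa S).toReal - (γ0 S).toReal| ≤ (γa T).toReal - (γ0 T).toReal := hkey
    _ = (γ0 (T' \ T)).toReal := hdiff
    _ ≤ |a| / σ := gauss_strip_bound hσ a hvol

lemma prod_toReal {α β : Type*} [MeasurableSpace α] [MeasurableSpace β]
    (μ : Measure α) (ν : Measure β) [IsProbabilityMeasure μ] [IsProbabilityMeasure ν]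
    {E : Set (α × β)} (hE : MeasurableSet E) :
    ((μ.prod ν) E).toReal = ∫ x, (ν (Prod.mk x ⁻¹' E)).toReal ∂μ := by
  rw [Measure.prod_apply hE, ← integral_toReal
    ((measurable_measure_prodMk_left hE).aemeasurable)
    (ae_of_all _ fun x => measure_lt_top _ _)]

lemma prod_toReal_symm {α β : Type*} [MeasurableSpace α] [MeasurableSpace β]
    (μ : Measure α) (ν : Measure β) [IsProbabilityMeasure μ] [IsProbabilityMeasure ν]
    {E : Set (α × β)} (hE : MeasurableSet E) :
    ((μ.prod ν) E).toReal = ∫ y, (μ ((fun x => (x, y)) ⁻¹' E)).toReal ∂ν := by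
  rw [Measure.prod_apply_symm hE, ← integral_toReal
    ((measurable_measure_prodMk_right hE).aemeasurable)
    (ae_of_all _ fun y => measure_lt_top _ _)]

lemma integrable_of_le_one {α : Type*} [MeasurableSpace α] (μ : Measure α)
    [IsProbabilityMeasure μ] {f : α → ℝ} (hf : Measurable f)
    (h0 : ∀ x, 0 ≤ f x) (h1 : ∀ x, f x ≤ 1) : Integrable f μ :=
  ⟨hf.aestronglyMeasurable, HasFiniteIntegral.of_bounded (C := 1)
    (ae_of_all _ fun x => by rw [Real.norm_eq_abs, abs_of_nonneg (h0 x)]; exact h1 x)⟩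

lemma integral_abs_diff_le {α : Type*} [MeasurableSpace α] (μ : Measure α)
    [IsProbabilityMeasure μ] {f g : α → ℝ} (hf : Integrable f μ) (hg : Integrable g μ)
    {c : ℝ} (h : ∀ x, |f x - g x| ≤ c) :
    |∫ x, f x ∂μ - ∫ x, g x ∂μ| ≤ c := by
  rw [← integral_sub hf hg]
  calc |∫ x, (f x - g x) ∂μ| ≤ ∫ x, |f x - g x| ∂μ := by
        simpa [Real.norm_eq_abs] using
          norm_integral_le_integral_norm (μ := μ) (fun x => f x - g x)
    _ ≤ ∫ _x, c ∂μ := integral_mono (hf.sub hg).abs (integrable_const c) h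
    _ = c := by simp

lemma meas_toReal_le_one {α : Type*} [MeasurableSpace α] {μ : Measure α}
    [IsProbabilityMeasure μ] (s : Set α) : (μ s).toReal ≤ 1 := by
  simpa using ENNReal.toReal_mono ENNReal.one_ne_top prob_le_one

lemma gauss_preimage_shift {σ : ℝ} (a : ℝ) {W : Set ℝ} (hW : MeasurableSet W) :
    gaussianReal 0 (gvar σ) {x | x + a ∈ W} = gaussianReal a (gvar σ) W := by
  have h := gaussianReal_map_add_const (μ := 0) (v := gvar σ) a
  rw [zero_add] at h
  rw [← h, Measure.map_apply (measurable_add_const a) hW]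
  rfl

lemma gauss_shift_one' {σ : ℝ} (hσ : 0 < σ) (a : ℝ) {W : Set ℝ} (hW : MeasurableSet W) :
    |(gaussianReal 0 (gvar σ) {x | x + a ∈ W}).toReal
      - (gaussianReal 0 (gvar σ) W).toReal| ≤ |a| / σ := by
  rw [gauss_preimage_shift a hW]
  exact gauss_shift_one hσ a hW

noncomputable def gPi (n : ℕ) (σ : ℝ) : Measure (Fin n → ℝ) :=
  Measure.pi fun _ => gaussianReal 0 (gvar σ)

instance (n : ℕ) (σ : ℝ) : IsProbabilityMeasure (gPi n σ) := by
  unfold gPi; infer_instance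

lemma gPi_shift {σ : ℝ} (hσ : 0 < σ) :
    ∀ (n : ℕ) (v : Fin n → ℝ) (S : Set (Fin n → ℝ)), MeasurableSet S →
      |(gPi n σ {z | (fun t => z t + v t) ∈ S}).toReal - (gPi n σ S).toReal|
        ≤ (∑ t, |v t|) / σ := by
  intro n
  induction n with
  | zero =>
      intro v S hS
      have hz : ∀ z : Fin 0 → ℝ, (fun t => z t + v t) = z := fun z => funext fun t => t.elim0
      have : {z : Fin 0 → ℝ | (fun t => z t + v t) ∈ S} = S := by
        ext z; simp [hz z]
      rw [this, sub_self, abs_zero]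
      positivity
  | succ n IH =>
      intro v S hS
      set γ := gaussianReal 0 (gvar σ) with hγ
      set e := MeasurableEquiv.piFinSuccAbove (fun _ : Fin (n + 1) => ℝ) 0 with he
      have mp : MeasurePreserving e (gPi (n + 1) σ) (γ.prod (gPi n σ)) :=
        measurePreserving_piFinSuccAbove (fun _ : Fin (n + 1) => γ) 0
      have mps : MeasurePreserving e.symm (γ.prod (gPi n σ)) (gPi (n + 1) σ) :=
        MeasurePreserving.symm e mp
      set Sv : Set (Fin (n + 1) → ℝ) := {z | (fun t => z t + v t) ∈ S} with hSv
      have hSvm : MeasurableSet Sv := by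
        have : Measurable fun z : Fin (n + 1) → ℝ => (fun t => z t + v t) :=
          measurable_pi_lambda _ fun t => (measurable_pi_apply t).add_const _
        exact this hS
      have hcons : ∀ (x : ℝ) (y : Fin n → ℝ), e.symm (x, y) = Fin.cons x y := by
        intro x y
        funext t
        refine Fin.cases ?_ ?_ t
        · simp [he]
        · intro j; simp [he]
      set F : Set (ℝ × (Fin n → ℝ)) := e.symm ⁻¹' S with hF
      have hFm : MeasurableSet F := e.symm.measurable hS
      set vt : Fin n → ℝ := fun j => v j.succ with hvt
      set Fv : Set (ℝ × (Fin n → ℝ)) :=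
        {p | (p.1 + v 0, fun j => p.2 j + vt j) ∈ F} with hFv
      set G₁ : Set (ℝ × (Fin n → ℝ)) := {p | (p.1 + v 0, p.2) ∈ F} with hG₁
      have hFvm : MeasurableSet Fv := by
        have hm : Measurable fun p : ℝ × (Fin n → ℝ) =>
            ((p.1 + v 0, fun j => p.2 j + vt j) : ℝ × (Fin n → ℝ)) :=
          (measurable_fst.add_const _).prodMk
            (measurable_pi_lambda _ fun j => ((measurable_pi_apply j).comp measurable_snd).add_const _)
        exact hm hFm
      have hG₁m : MeasurableSet G₁ :=
        ((measurable_fst.add_const _).prodMk measurable_snd) hFm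
      have hpre : e.symm ⁻¹' Sv = Fv := by
        ext ⟨x, y⟩
        simp only [Set.mem_preimage, hSv, Set.mem_setOf_eq, hcons, hFv, hF]
        constructor
        · intro h
          have : (fun t => (Fin.cons x y : Fin (n + 1) → ℝ) t + v t)
              = Fin.cons (x + v 0) (fun j => y j + vt j) := by
            funext t
            refine Fin.cases ?_ ?_ t
            · simp
            · intro j; simp [hvt]
          rw [this] at h
          simpa [hcons] using h
        · intro h
          have : (fun t => (Fin.cons x y : Fin (n + 1) → ℝ) t + v t)
              = Fin.cons (x + v 0) (fun j => y j + vt j) := by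
            funext t
            refine Fin.cases ?_ ?_ t
            · simp
            · intro j; simp [hvt]
          rw [this]
          simpa [hcons] using h
      have happSv : gPi (n + 1) σ Sv = (γ.prod (gPi n σ)) Fv := by
        rw [← mps.measure_preimage hSvm.nullMeasurableSet, hpre]
      have happS : gPi (n + 1) σ S = (γ.prod (gPi n σ)) F := by
        rw [← mps.measure_preimage hS.nullMeasurableSet]
      -- Step A : compare Fv with G₁
      have stepA : |((γ.prod (gPi n σ)) Fv).toReal - ((γ.prod (gPi n σ)) G₁).toReal|
          ≤ (∑ j, |vt j|) / σ := by
        rw [prod_toReal γ (gPi n σ) hFvm, prod_toReal γ (gPi n σ) hG₁m]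
        refine integral_abs_diff_le γ
          (integrable_of_le_one γ (measurable_measure_prodMk_left hFvm).ennreal_toReal
            (fun x => ENNReal.toReal_nonneg) (fun x => meas_toReal_le_one _))
          (integrable_of_le_one γ (measurable_measure_prodMk_left hG₁m).ennreal_toReal
            (fun x => ENNReal.toReal_nonneg) (fun x => meas_toReal_le_one _)) ?_
        intro x
        have hsec : MeasurableSet (Prod.mk (x + v 0) ⁻¹' F) := measurable_prodMk_left hFm
        have h1 : Prod.mk x ⁻¹' Fv
            = {y : Fin n → ℝ | (fun t => y t + vt t) ∈ Prod.mk (x + v 0) ⁻¹' F} := rfl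
        have h2 : Prod.mk x ⁻¹' G₁ = Prod.mk (x + v 0) ⁻¹' F := rfl
        rw [h1, h2]
        exact IH vt _ hsec
      -- Step B : compare G₁ with F
      have stepB : |((γ.prod (gPi n σ)) G₁).toReal - ((γ.prod (gPi n σ)) F).toReal|
          ≤ |v 0| / σ := by
        rw [prod_toReal_symm γ (gPi n σ) hG₁m, prod_toReal_symm γ (gPi n σ) hFm]
        refine integral_abs_diff_le (gPi n σ)
          (integrable_of_le_one _ (measurable_measure_prodMk_right hG₁m).ennreal_toReal
            (fun y => ENNReal.toReal_nonneg) (fun y => meas_toReal_le_one _))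
          (integrable_of_le_one _ (measurable_measure_prodMk_right hFm).ennreal_toReal
            (fun y => ENNReal.toReal_nonneg) (fun y => meas_toReal_le_one _)) ?_
        intro y
        have hsec : MeasurableSet ((fun x => (x, y)) ⁻¹' F) := measurable_prodMk_right hFm
        have h1 : (fun x => (x, y)) ⁻¹' G₁ = {x : ℝ | x + v 0 ∈ (fun x => (x, y)) ⁻¹' F} := rfl
        rw [h1]
        exact gauss_shift_one' hσ (v 0) hsec
      have hsum : (∑ j, |vt j|) / σ + |v 0| / σ = (∑ t, |v t|) / σ := by
        rw [← add_div]
        congr 1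
        rw [Fin.sum_univ_succ]
        ring
      calc |(gPi (n + 1) σ Sv).toReal - (gPi (n + 1) σ S).toReal|
          = |((γ.prod (gPi n σ)) Fv).toReal - ((γ.prod (gPi n σ)) F).toReal| := by
            rw [happSv, happS]
        _ ≤ |((γ.prod (gPi n σ)) Fv).toReal - ((γ.prod (gPi n σ)) G₁).toReal|
            + |((γ.prod (gPi n σ)) G₁).toReal - ((γ.prod (gPi n σ)) F).toReal| :=
            abs_sub_le _ _ _
        _ ≤ (∑ j, |vt j|) / σ + |v 0| / σ := add_le_add stepA stepB
        _ = (∑ t, |v t|) / σ := hsum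

lemma map_eval_pi' {n : ℕ} (ν : Measure ℝ) [IsProbabilityMeasure ν] (t : Fin n) :
    (Measure.pi fun _ : Fin n => ν).map (Function.eval t) = ν := by
  ext s hs
  rw [Measure.map_apply (measurable_pi_apply t) hs]
  have hp : Function.eval t ⁻¹' s
      = Set.pi Set.univ (Function.update (fun _ : Fin n => (Set.univ : Set ℝ)) t s) := by
    ext z
    simp only [Set.mem_preimage, Set.mem_univ_pi, Function.eval]
    constructor
    · intro h j
      rcases eq_or_ne j t with rfl | hj
      · simpa [Function.update_self] using h
      · simp [Function.update_of_ne hj]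
    · intro h
      simpa [Function.update_self] using h t
  rw [hp, Measure.pi_pi]
  rw [Finset.prod_eq_single t (fun j _ hj => by simp [Function.update_of_ne hj])
    (fun h => absurd (Finset.mem_univ t) h)]
  simp [Function.update_self]

lemma integrable_abs_eval {n : ℕ} (ν : Measure ℝ) [IsProbabilityMeasure ν]
    (habs : Integrable (fun x : ℝ => |x|) ν) (t : Fin n) :
    Integrable (fun g : Fin n → ℝ => |g t|) (Measure.pi fun _ : Fin n => ν) := by
  have h := (integrable_map_measure (μ := Measure.pi fun _ : Fin n => ν)
    (f := (Function.eval t : (Fin n → ℝ) → ℝ)) (g := fun x : ℝ => |x|)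
    (continuous_abs.measurable.aestronglyMeasurable)
    (measurable_pi_apply t).aemeasurable)
  rw [map_eval_pi' ν t] at h
  exact h.mp habs

lemma integral_abs_eval {n : ℕ} (ν : Measure ℝ) [IsProbabilityMeasure ν]
    (habs : Integrable (fun x : ℝ => |x|) ν) (t : Fin n) :
    ∫ g, |g t| ∂(Measure.pi fun _ : Fin n => ν) = ∫ x, |x| ∂ν := by
  have h := integral_map (μ := Measure.pi fun _ : Fin n => ν)
    (φ := (Function.eval t : (Fin n → ℝ) → ℝ)) (f := fun x : ℝ => |x|)
    (measurable_pi_apply t).aemeasurable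
    continuous_abs.measurable.aestronglyMeasurable
  rw [map_eval_pi' ν t] at h
  exact h.symm

lemma gaussPi_eq_gPi (n : ℕ) (σ : ℝ) : gaussPi n σ = gPi n σ := rfl

lemma integral_abs_diff_le' {α : Type*} [MeasurableSpace α] (μ : Measure α)
    {f g h : α → ℝ} (hf : Integrable f μ) (hg : Integrable g μ) (hh : Integrable h μ)
    (hb : ∀ x, |f x - g x| ≤ h x) :
    |∫ x, f x ∂μ - ∫ x, g x ∂μ| ≤ ∫ x, h x ∂μ := by
  rw [← integral_sub hf hg]
  calc |∫ x, (f x - g x) ∂μ| ≤ ∫ x, |f x - g x| ∂μ := by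
        simpa [Real.norm_eq_abs] using
          norm_integral_le_integral_norm (μ := μ) (fun x => f x - g x)
    _ ≤ ∫ x, h x ∂μ := integral_mono (hf.sub hg).abs hh hb

lemma measurable_shiftmul (n : ℕ) (u : Fin n → ℝ) :
    Measurable fun p : (Fin n → ℝ) × (Fin n → ℝ) =>
      ((p.1, fun t => p.1 t * u t + p.2 t) : (Fin n → ℝ) × (Fin n → ℝ)) :=
  measurable_fst.prodMk (measurable_pi_lambda _ fun t => by
    fun_prop)

lemma accProb_integrand_integrable {n : ℕ} {σ : ℝ} (ν : Measure ℝ) [IsProbabilityMeasure ν]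
    (u : Fin n → ℝ) {D : (Fin n → ℝ) → Set (Fin n → ℝ)}
    (hD : MeasurableSet {p : (Fin n → ℝ) × (Fin n → ℝ) | p.2 ∈ D p.1}) :
    Integrable (fun g => (gPi n σ {z : Fin n → ℝ | (fun t => g t * u t + z t) ∈ D g}).toReal)
      (Measure.pi fun _ : Fin n => ν) := by
  have hE : MeasurableSet ((fun p : (Fin n → ℝ) × (Fin n → ℝ) =>
      ((p.1, fun t => p.1 t * u t + p.2 t) : (Fin n → ℝ) × (Fin n → ℝ))) ⁻¹'
      {p : (Fin n → ℝ) × (Fin n → ℝ) | p.2 ∈ D p.1}) := (measurable_shiftmul n u) hD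
  exact integrable_of_le_one _
    ((measurable_measure_prodMk_left (ν := gPi n σ) hE).ennreal_toReal)
    (fun g => ENNReal.toReal_nonneg) (fun g => meas_toReal_le_one _)

lemma accProb_close {n : ℕ} {σ : ℝ} (hσ : 0 < σ) (ν : Measure ℝ) [IsProbabilityMeasure ν]
    (habs : Integrable (fun x : ℝ => |x|) ν)
    (u u' : Fin n → ℝ) (D : (Fin n → ℝ) → Set (Fin n → ℝ))
    (hD : MeasurableSet {p : (Fin n → ℝ) × (Fin n → ℝ) | p.2 ∈ D p.1}) :
    |accProb n σ ν u D - accProb n σ ν u' D|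
      ≤ (∑ t, |u t - u' t|) * (∫ x, |x| ∂ν) / σ := by
  have hE' : MeasurableSet ((fun p : (Fin n → ℝ) × (Fin n → ℝ) =>
      ((p.1, fun t => p.1 t * u' t + p.2 t) : (Fin n → ℝ) × (Fin n → ℝ))) ⁻¹'
      {p : (Fin n → ℝ) × (Fin n → ℝ) | p.2 ∈ D p.1}) := (measurable_shiftmul n u') hD
  have hterm : ∀ t : Fin n, Integrable
      (fun g : Fin n → ℝ => |g t| * |u t - u' t|) (Measure.pi fun _ : Fin n => ν) :=
    fun t => (integrable_abs_eval ν habs t).mul_const _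
  have hh : Integrable (fun g : Fin n → ℝ => (∑ t, |g t| * |u t - u' t|) / σ)
      (Measure.pi fun _ : Fin n => ν) :=
    Integrable.div_const (integrable_finset_sum _ fun t _ => hterm t) σ
  have hpt : ∀ g : Fin n → ℝ,
      |(gPi n σ {z : Fin n → ℝ | (fun t => g t * u t + z t) ∈ D g}).toReal
        - (gPi n σ {z : Fin n → ℝ | (fun t => g t * u' t + z t) ∈ D g}).toReal|
        ≤ (∑ t, |g t| * |u t - u' t|) / σ := by
    intro g
    set Sg : Set (Fin n → ℝ) := {z : Fin n → ℝ | (fun t => g t * u' t + z t) ∈ D g} with hSgdef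
    have hSg : MeasurableSet Sg := measurable_prodMk_left hE'
    set w : Fin n → ℝ := fun t => g t * (u t - u' t) with hw
    have hset : {z : Fin n → ℝ | (fun t => g t * u t + z t) ∈ D g}
        = {z : Fin n → ℝ | (fun t => z t + w t) ∈ Sg} := by
      ext z
      have hfun : (fun t => g t * u' t + (z t + w t)) = fun t => g t * u t + z t := by
        funext t
        simp only [hw]
        ring
      simp only [hSgdef, Set.mem_setOf_eq, hfun]
    have hws : (∑ t, |w t|) = ∑ t, |g t| * |u t - u' t| := by
      refine Finset.sum_congr rfl fun t _ => ?_
      simp only [hw]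
      exact abs_mul _ _
    rw [hset, ← hws]
    exact gPi_shift hσ n w Sg hSg
  have key := integral_abs_diff_le' (Measure.pi fun _ : Fin n => ν)
    (accProb_integrand_integrable (σ := σ) ν u hD)
    (accProb_integrand_integrable (σ := σ) ν u' hD) hh hpt
  have hcomp : ∫ g, (∑ t, |g t| * |u t - u' t|) / σ ∂(Measure.pi fun _ : Fin n => ν)
      = (∑ t, |u t - u' t|) * (∫ x, |x| ∂ν) / σ := by
    rw [integral_div, integral_finset_sum _ fun t _ => hterm t]
    congr 1
    have : ∀ t : Fin n, ∫ g, |g t| * |u t - u' t| ∂(Measure.pi fun _ : Fin n => ν)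
        = |u t - u' t| * ∫ x, |x| ∂ν := by
      intro t
      rw [integral_mul_const, integral_abs_eval ν habs t]
      ring
    rw [Finset.sum_congr rfl fun t _ => this t, ← Finset.sum_mul]
  rw [accProb, accProb, gaussPi_eq_gPi, ← hcomp]
  exact key

lemma exists_close_pair {n M : ℕ} {B δ : ℝ} (hδ : 0 < δ) (u : Fin M → Fin n → ℝ)
    (hu : ∀ i t, |u i t| ≤ B)
    (hM : (2 * ⌈B / δ⌉₊ + 1) ^ n < M) :
    ∃ i j : Fin M, i ≠ j ∧ ∀ t, |u i t - u j t| ≤ δ := by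
  set K : ℤ := (⌈B / δ⌉₊ : ℤ) with hK
  have hBK : B / δ ≤ (K : ℝ) := by
    rw [hK]
    push_cast
    exact Nat.le_ceil _
  set f : Fin M → (Fin n → ℤ) := fun i t => ⌊u i t / δ⌋ with hf
  have hmem : ∀ i, f i ∈ Fintype.piFinset (fun _ : Fin n => Finset.Icc (-K) K) := by
    intro i
    rw [Fintype.mem_piFinset]
    intro t
    rw [Finset.mem_Icc]
    have hb := hu i t
    have habs : |u i t / δ| ≤ (K : ℝ) := by
      rw [abs_div, abs_of_pos hδ]
      calc |u i t| / δ ≤ B / δ := by gcongr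
        _ ≤ (K : ℝ) := hBK
    rw [abs_le] at habs
    constructor
    · exact Int.le_floor.mpr (by exact_mod_cast habs.1)
    · calc ⌊u i t / δ⌋ ≤ ⌊(K : ℝ)⌋ := Int.floor_le_floor habs.2
        _ = K := Int.floor_intCast K
  have hcard : (Fintype.piFinset (fun _ : Fin n => Finset.Icc (-K) K)).card
      = (2 * ⌈B / δ⌉₊ + 1) ^ n := by
    rw [Fintype.card_piFinset]
    rw [Finset.prod_const, Finset.card_univ, Fintype.card_fin]
    congr 1
    rw [Int.card_Icc]
    rw [hK]
    omega
  have hlt : (Fintype.piFinset (fun _ : Fin n => Finset.Icc (-K) K)).card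
      < (Finset.univ : Finset (Fin M)).card := by
    rw [hcard, Finset.card_univ, Fintype.card_fin]
    exact hM
  obtain ⟨i, _, j, _, hne, heq⟩ :=
    Finset.exists_ne_map_eq_of_card_lt_of_maps_to hlt (fun i _ => hmem i)
  refine ⟨i, j, hne, fun t => ?_⟩
  have hfl : ⌊u i t / δ⌋ = ⌊u j t / δ⌋ := congrFun heq t
  have h1 : |u i t / δ - u j t / δ| < 1 := Int.abs_sub_lt_one_of_floor_eq_floor hfl
  rw [div_sub_div_same, abs_div, abs_of_pos hδ, div_lt_one hδ] at h1
  exact h1.le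


set_option maxHeartbeats 2000000 in
/-- Zero DI capacity in the double-exponential scale for fast fading: for
every `R > 0` and all large `n`, there is no deterministic identification code
for the fast-fading Gaussian channel with `M ≥ 2^{2^{nR}}` codewords of power
at most `nA`, type I errors at most `lam₁`, and type II errors at most `lam₂`
(where `lam₁ + lam₂ < 1`). -/
theorem fastFading_DI_doubleExponential_scale_zero
    (A σ : ℝ) (hA : 0 < A) (hσ : 0 < σ)
    (ν : Measure ℝ) [IsProbabilityMeasure ν]
    (hm : Integrable (fun g : ℝ => g ^ 2) ν)
    (lam₁ lam₂ : ℝ) (hlam₁ : 0 ≤ lam₁) (hlam₂ : 0 ≤ lam₂)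
    (hlam : lam₁ + lam₂ < 1) (R : ℝ) (hR : 0 < R) :
    ∃ n₀ : ℕ, ∀ n ≥ n₀,
      ¬ ∃ (M : ℕ) (u : Fin M → (Fin n → ℝ))
          (D : Fin M → ((Fin n → ℝ) → Set (Fin n → ℝ))),
        (2 : ℝ) ^ ((2 : ℝ) ^ ((n : ℝ) * R)) ≤ (M : ℝ) ∧
        (∀ i, ∑ t, u i t ^ 2 ≤ (n : ℝ) * A) ∧
        (∀ i, MeasurableSet {p : (Fin n → ℝ) × (Fin n → ℝ) | p.2 ∈ D i p.1}) ∧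
        (∀ i, 1 - lam₁ ≤ accProb n σ ν (u i) (D i)) ∧
        (∀ i j, i ≠ j → accProb n σ ν (u i) (D j) ≤ lam₂) := by
  have habs : Integrable (fun x : ℝ => |x|) ν := by
    have hbb : Integrable (fun x : ℝ => 1 + x ^ 2) ν := by
      simpa using (integrable_const (1 : ℝ)).add hm
    refine hbb.mono' continuous_abs.measurable.aestronglyMeasurable
      (ae_of_all _ fun x => ?_)
    simp only [Real.norm_eq_abs, abs_abs]
    nlinarith [sq_abs x, sq_nonneg (|x| - 1)]
  obtain ⟨m, hmdef⟩ : ∃ m : ℝ, m = ∫ x, |x| ∂ν := ⟨_, rfl⟩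
  have hm0 : 0 ≤ m := hmdef ▸ integral_nonneg fun x => abs_nonneg x
  obtain ⟨ε, hε⟩ : ∃ ε : ℝ, ε = (1 - lam₁ - lam₂) / 2 := ⟨_, rfl⟩
  have hε0 : 0 < ε := by rw [hε]; linarith
  obtain ⟨κ, hκ⟩ : ∃ κ : ℝ, κ = ε * σ / (m + 1) := ⟨_, rfl⟩
  have hκ0 : 0 < κ := by rw [hκ]; positivity
  obtain ⟨C, hC⟩ : ∃ C : ℝ, C = 2 * Real.sqrt A / κ + 3 := ⟨_, rfl⟩
  have hC3 : 3 ≤ C := by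
    rw [hC]
    have : 0 ≤ 2 * Real.sqrt A / κ := by positivity
    linarith
  have hC0 : 0 < C := by linarith
  have hlog2 : 0 < Real.log 2 := Real.log_pos one_lt_two
  obtain ⟨d, hd⟩ : ∃ d : ℝ, d = (R * Real.log 2) ^ 3 * Real.log 2 := ⟨_, rfl⟩
  have hd0 : 0 < d := by rw [hd]; positivity
  refine ⟨max 1 ⌈6 * (C + 2) / d + 1⌉₊, fun n hn => ?_⟩
  rintro ⟨M, u, D, hM, hpow, hDm, h1, h2⟩
  have hn1 : 1 ≤ n := le_trans (le_max_left _ _) hn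
  have hnR : (1 : ℝ) ≤ (n : ℝ) := by exact_mod_cast hn1
  have hn0 : (0 : ℝ) < (n : ℝ) := by linarith
  have hnbig : 6 * (C + 2) / d + 1 ≤ (n : ℝ) := by
    have h' : (⌈6 * (C + 2) / d + 1⌉₊ : ℝ) ≤ (n : ℝ) :=
      Nat.cast_le.mpr (le_trans (le_max_right _ _) hn)
    exact (Nat.le_ceil _).trans h'
  obtain ⟨δ, hδdef⟩ : ∃ δ : ℝ, δ = κ / n := ⟨_, rfl⟩
  have hδ : 0 < δ := by rw [hδdef]; positivity
  obtain ⟨B, hBdef⟩ : ∃ B : ℝ, B = Real.sqrt ((n : ℝ) * A) := ⟨_, rfl⟩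
  have hB : ∀ i t, |u i t| ≤ B := by
    intro i t
    rw [hBdef]
    refine Real.abs_le_sqrt ?_
    calc u i t ^ 2 ≤ ∑ s, u i s ^ 2 :=
          Finset.single_le_sum (f := fun s => u i s ^ 2)
            (fun s _ => sq_nonneg _) (Finset.mem_univ t)
      _ ≤ (n : ℝ) * A := hpow i
  obtain ⟨K, hKdef⟩ : ∃ K : ℕ, K = ⌈B / δ⌉₊ := ⟨_, rfl⟩
  -- bound 2K+1 ≤ C n²
  have hKb : (2 * K + 1 : ℝ) ≤ C * (n : ℝ) ^ 2 := by
    have hsA : 0 ≤ Real.sqrt A := Real.sqrt_nonneg A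
    have hB0 : 0 ≤ B := hBdef ▸ Real.sqrt_nonneg _
    have hBδ : B / δ ≤ Real.sqrt A / κ * (n : ℝ) ^ 2 := by
      have hs : Real.sqrt (n : ℝ) ≤ (n : ℝ) := by
        have h := Real.sqrt_le_sqrt (show (n : ℝ) ≤ (n : ℝ) ^ 2 by nlinarith)
        rwa [Real.sqrt_sq hn0.le] at h
      have hBle : B ≤ Real.sqrt A * (n : ℝ) := by
        rw [hBdef, mul_comm (n : ℝ) A, Real.sqrt_mul hA.le]
        exact mul_le_mul_of_nonneg_left hs hsA
      calc B / δ = B * (n : ℝ) / κ := by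
            rw [hδdef]; field_simp
        _ ≤ (Real.sqrt A * (n : ℝ)) * (n : ℝ) / κ := by gcongr
        _ = Real.sqrt A / κ * (n : ℝ) ^ 2 := by ring
    have hceil : (K : ℝ) < B / δ + 1 := by
      rw [hKdef]
      exact Nat.ceil_lt_add_one (div_nonneg hB0 hδ.le)
    have hn2 : (1 : ℝ) ≤ (n : ℝ) ^ 2 := by nlinarith
    have hexpand : (2 * Real.sqrt A / κ + 3) * (n : ℝ) ^ 2
        = 2 * (Real.sqrt A / κ * (n : ℝ) ^ 2) + 3 * (n : ℝ) ^ 2 := by ring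
    rw [hC, hexpand]
    linarith
  -- counting bound
  have hcount : (((2 * K + 1) ^ n : ℕ) : ℝ) < (M : ℝ) := by
    have hexp : ((2 * K + 1 : ℝ)) ^ n < (2 : ℝ) ^ ((2 : ℝ) ^ ((n : ℝ) * R)) := by
      have hpos : (0 : ℝ) < 2 * K + 1 := by positivity
      have hCn : (0 : ℝ) < C * (n : ℝ) ^ 2 := by positivity
      have hlhs : ((2 * K + 1 : ℝ)) ^ n ≤ (C * (n : ℝ) ^ 2) ^ n :=
        pow_le_pow_left₀ hpos.le hKb n
      have hClog : Real.log (C * (n : ℝ) ^ 2) ≤ (C + 2) * (n : ℝ) := by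
        rw [Real.log_mul hC0.ne' (by positivity), Real.log_pow]
        have l1 : Real.log C ≤ C := (Real.log_le_sub_one_of_pos hC0).trans (by linarith)
        have l2 : Real.log (n : ℝ) ≤ (n : ℝ) :=
          (Real.log_le_sub_one_of_pos hn0).trans (by linarith)
        have hCn' : C * 1 ≤ C * (n : ℝ) := mul_le_mul_of_nonneg_left hnR hC0.le
        push_cast
        nlinarith
      have hkey : (n : ℝ) * Real.log (C * (n : ℝ) ^ 2)
          < Real.log 2 * (2 : ℝ) ^ ((n : ℝ) * R) := by
        have hup : (n : ℝ) * Real.log (C * (n : ℝ) ^ 2) ≤ (C + 2) * (n : ℝ) ^ 2 := by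
          have h := mul_le_mul_of_nonneg_left hClog hn0.le
          nlinarith
        have hlow : (Real.log 2 * ((n : ℝ) * R)) ^ 3 / 6
            ≤ Real.exp (Real.log 2 * ((n : ℝ) * R)) := by
          have h := Real.pow_div_factorial_le_exp
            (x := Real.log 2 * ((n : ℝ) * R)) (by positivity) 3
          norm_num [Nat.factorial] at h
          exact h
        have hexp3 : Real.log 2 * ((Real.log 2 * ((n : ℝ) * R)) ^ 3 / 6)
            = (n : ℝ) ^ 3 * d / 6 := by
          rw [hd]; ring
        have hfin : (C + 2) * (n : ℝ) ^ 2 < (n : ℝ) ^ 3 * d / 6 := by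
          have hnd : 6 * (C + 2) + d ≤ (n : ℝ) * d := by
            have h := mul_le_mul_of_nonneg_right hnbig hd0.le
            rw [add_mul, div_mul_cancel₀ _ hd0.ne', one_mul] at h
            linarith
          nlinarith [sq_nonneg ((n : ℝ) - 1)]
        calc (n : ℝ) * Real.log (C * (n : ℝ) ^ 2) ≤ (C + 2) * (n : ℝ) ^ 2 := hup
          _ < (n : ℝ) ^ 3 * d / 6 := hfin
          _ = Real.log 2 * ((Real.log 2 * ((n : ℝ) * R)) ^ 3 / 6) := hexp3.symm
          _ ≤ Real.log 2 * Real.exp (Real.log 2 * ((n : ℝ) * R)) :=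
              mul_le_mul_of_nonneg_left hlow hlog2.le
          _ = Real.log 2 * (2 : ℝ) ^ ((n : ℝ) * R) := by
              rw [Real.rpow_def_of_pos two_pos]
      have hrhs : (C * (n : ℝ) ^ 2) ^ n < (2 : ℝ) ^ ((2 : ℝ) ^ ((n : ℝ) * R)) := by
        rw [show (C * (n : ℝ) ^ 2) ^ n = Real.exp ((n : ℝ) * Real.log (C * (n : ℝ) ^ 2)) by
            rw [← Real.log_pow, Real.exp_log (pow_pos hCn n)],
          show (2 : ℝ) ^ ((2 : ℝ) ^ ((n : ℝ) * R))
              = Real.exp (Real.log 2 * (2 : ℝ) ^ ((n : ℝ) * R)) by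
            rw [Real.rpow_def_of_pos two_pos]]
        exact Real.exp_lt_exp.mpr hkey
      exact lt_of_le_of_lt hlhs hrhs
    calc (((2 * K + 1) ^ n : ℕ) : ℝ) = ((2 * K + 1 : ℝ)) ^ n := by push_cast; ring
      _ < (2 : ℝ) ^ ((2 : ℝ) ^ ((n : ℝ) * R)) := hexp
      _ ≤ (M : ℝ) := hM
  have hnat : (2 * ⌈B / δ⌉₊ + 1) ^ n < M := by
    rw [← hKdef]
    exact_mod_cast hcount
  obtain ⟨i, j, hne, hclose⟩ := exists_close_pair hδ u hB hnat
  have hsum : ∑ t, |u i t - u j t| ≤ κ := by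
    calc ∑ t, |u i t - u j t| ≤ ∑ _t : Fin n, δ :=
          Finset.sum_le_sum fun t _ => hclose t
      _ = (n : ℝ) * δ := by
          rw [Finset.sum_const, Finset.card_univ, Fintype.card_fin, nsmul_eq_mul]
      _ = κ := by rw [hδdef, mul_div_cancel₀ _ hn0.ne']
  have hdiff := accProb_close hσ ν habs (u i) (u j) (D j) (hDm j)
  rw [← hmdef] at hdiff
  have hbound : (∑ t, |u i t - u j t|) * m / σ ≤ ε := by
    have hsumnn : 0 ≤ ∑ t, |u i t - u j t| :=
      Finset.sum_nonneg fun t _ => abs_nonneg _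
    have hb1 : (∑ t, |u i t - u j t|) * m / σ ≤ κ * m / σ := by gcongr
    have hb2 : κ * m / σ = ε * (m / (m + 1)) := by
      rw [hκ]; field_simp
    have hb3 : m / (m + 1) ≤ 1 := by
      rw [div_le_one (by linarith)]; linarith
    calc (∑ t, |u i t - u j t|) * m / σ ≤ κ * m / σ := hb1
      _ = ε * (m / (m + 1)) := hb2
      _ ≤ ε * 1 := mul_le_mul_of_nonneg_left hb3 hε0.le
      _ = ε := mul_one ε
  have habs' : |accProb n σ ν (u i) (D j) - accProb n σ ν (u j) (D j)| ≤ ε :=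
    hdiff.trans hbound
  rw [abs_le] at habs'
  have hA1 := h1 j
  have hA2 := h2 i j hne
  rw [hε] at habs'
  linarith [habs'.1, habs'.2]
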